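/- Let N ≥ 1, α ∈ ℝ, and let g : ℂ^N → ℂ be holomorphic (complex differentiable in all variables). Define, for x = (x₁,…,x_N) ∈ (ℝ²)^N with z_j = x_{j,1} + i x_{j,2}, the functions Ψ₊(x) := (∏_{1≤j<k≤N} |x_j − x_k|^{−α}) · conj(g(z₁,…,z_N)) and Ψ₋(x) := (∏_{1≤j<k≤N} |x_j − x_k|^{α}) · g(z₁,…,z_N). Then at every point x of (ℝ²)^N ∖ △△ one has Σ_{j=1}^N D_j² Ψ₊(x) = 0 and Σ_{j=1}^N D_j² Ψ₋(x) = 0; i.e., Ψ₊ and Ψ₋ are generalized zero-energy eigenfunctions of the N-anyon kinetic energy operator on the complement of the fat diagonal. -/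

import Mathlib

open MeasureTheory Finset
open scoped BigOperators ComplexConjugate

noncomputable section

/-- Configuration space of `N` particles in the plane. -/
abbrev Conf (N : ℕ) := Fin N → Fin 2 → ℝ

/-- Euclidean norm of a planar vector. -/
def nrm (v : Fin 2 → ℝ) : ℝ := Real.sqrt (v 0 ^ 2 + v 1 ^ 2)

/-- Counterclockwise 90°-rotation `x^⊥ = (-x₂, x₁)`. -/
def perp (v : Fin 2 → ℝ) : Fin 2 → ℝ := ![-(v 1), v 0]

/-- Complex coordinate `z = x₁ + i x₂` of a planar point. -/
def zC (v : Fin 2 → ℝ) : ℂ := (v 0 : ℂ) + (v 1 : ℂ) * Complex.I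

/-- Standard basis vector labelled `(j,i)` of the configuration space. -/
def evec {N : ℕ} (j : Fin N) (i : Fin 2) : Conf N :=
  fun j' i' => if j' = j ∧ i' = i then 1 else 0

/-- Partial derivative in the variable `(j,i)` of a complex-valued function. -/
def pd {N : ℕ} (j : Fin N) (i : Fin 2) (f : Conf N → ℂ) (x : Conf N) : ℂ :=
  fderiv ℝ f x (evec j i)

/-- Partial derivative in the variable `(j,i)` of a real-valued function. -/
def pdR {N : ℕ} (j : Fin N) (i : Fin 2) (f : Conf N → ℝ) (x : Conf N) : ℝ :=
  fderiv ℝ f x (evec j i)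

/-- Ideal anyon magnetic potential `A_j(x) = Σ_{k≠j} (x_j - x_k)^{-⊥}`. -/
def Avec {N : ℕ} (j : Fin N) (x : Conf N) : Fin 2 → ℝ :=
  ∑ k ∈ univ.filter (fun k => k ≠ j), (1 / nrm (x j - x k) ^ 2) • perp (x j - x k)

/-- Component `i` of the magnetically coupled momentum `D_j = -i∇_j + αA_j`. -/
def Dop {N : ℕ} (α : ℝ) (j : Fin N) (i : Fin 2) (f : Conf N → ℂ) (x : Conf N) : ℂ :=
  (-Complex.I) * pd j i f x + ((α * Avec j x i : ℝ) : ℂ) * f x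

/-- The magnetic Laplacian `D_j² = D_j · D_j`. -/
def D2 {N : ℕ} (α : ℝ) (j : Fin N) (f : Conf N → ℂ) (x : Conf N) : ℂ :=
  ∑ i : Fin 2, Dop α j i (fun y => Dop α j i f y) x

/-- The fat diagonal of the configuration space. -/
def fatDiag (N : ℕ) : Set (Conf N) := {x | ∃ j k, j ≠ k ∧ x j = x k}



open Metric Filter Finset
open scoped BigOperators ComplexConjugate Topology

noncomputable section

/-- Cauchy estimate for the derivative at `0` of an entire function. -/
lemma cauchy_est {ψ : ℂ → ℂ} (hψ : Differentiable ℂ ψ) {R C : ℝ} (hR : 0 < R)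
    (hC : ∀ s : ℂ, ‖s‖ = R → ‖ψ s‖ ≤ C) : ‖deriv ψ 0‖ ≤ C / R := by
  refine Complex.norm_deriv_le_of_forall_mem_sphere_norm_le hR hψ.diffContOnCl ?_
  intro s hs
  exact hC s (by simpa [Complex.dist_eq] using hs)

/-- Quantitative first-order Taylor estimate for an entire function on the unit disc. -/
lemma oneD_est {φ : ℂ → ℂ} (hφ : Differentiable ℂ φ) {M : ℝ}
    (hM : ∀ s : ℂ, ‖s‖ ≤ 3 → ‖φ s‖ ≤ M) {h : ℂ} (hh : ‖h‖ ≤ 1) :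
    ‖φ h - φ 0 - h * deriv φ 0‖ ≤ M * ‖h‖ ^ 2 := by
  have hM0 : 0 ≤ M := le_trans (norm_nonneg _) (hM 0 (by norm_num))
  set ψ := dslope φ 0 with hψdef
  have hψ : Differentiable ℂ ψ := by
    have := (Complex.differentiableOn_dslope (f := φ) (s := Set.univ) (c := 0)
      Filter.univ_mem).mpr hφ.differentiableOn
    intro t; exact (this t (Set.mem_univ t)).differentiableAt Filter.univ_mem
  -- bound on deriv ψ on the closed unit ball
  have hder : ∀ t ∈ closedBall (0:ℂ) 1, ‖deriv ψ t‖ ≤ M := by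
    intro t ht
    rw [mem_closedBall, dist_zero_right] at ht
    -- shift to center 0
    have key : ‖deriv (fun s => ψ (t + s)) 0‖ ≤ (2 * M) / 2 := by
      refine cauchy_est (hψ.comp (differentiable_id.const_add t)) two_pos ?_
      intro s hs
      have hne : t + s ≠ 0 := by
        intro h0
        have : ‖s‖ ≤ 1 := by
          have : s = -t := by linear_combination h0
          simpa [this] using ht
        rw [hs] at this; norm_num at this
      have h1 : (1:ℝ) ≤ ‖t + s‖ := by
        have h4 : ‖s‖ ≤ ‖t + s‖ + ‖t‖ := by
          calc ‖s‖ = ‖(t + s) - t‖ := by congr 1; ring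
          _ ≤ ‖t + s‖ + ‖t‖ := norm_sub_le _ _
        rw [hs] at h4; linarith
      have h3 : ‖t + s‖ ≤ 3 := by
        calc ‖t + s‖ ≤ ‖t‖ + ‖s‖ := norm_add_le _ _
        _ ≤ 1 + 2 := by rw [hs]; linarith
        _ = 3 := by norm_num
      have hval : ψ (t + s) = (t + s)⁻¹ * (φ (t + s) - φ 0) := by
        rw [hψdef, dslope_of_ne _ hne, slope_def_field]
        field_simp
        ring
      show ‖ψ (t + s)‖ ≤ 2 * M
      rw [hval, norm_mul, norm_inv]
      have hnum : ‖φ (t + s) - φ 0‖ ≤ 2 * M := by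
        calc ‖φ (t + s) - φ 0‖ ≤ ‖φ (t+s)‖ + ‖φ 0‖ := norm_sub_le _ _
        _ ≤ M + M := add_le_add (hM _ h3) (hM 0 (by norm_num))
        _ = 2 * M := by ring
      calc ‖(t+s)‖⁻¹ * ‖φ (t + s) - φ 0‖ ≤ 1 * (2*M) := by
            apply mul_le_mul _ hnum (norm_nonneg _) (by norm_num)
            rw [inv_le_one_iff₀]; right; exact h1
      _ = 2 * M := by ring
    have : deriv (fun s => ψ (t + s)) 0 = deriv ψ t := by
      rw [deriv_comp_const_add]
      simp
    rw [this] at key; linarith [key]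
  -- mean value inequality
  have hmvt : ‖ψ h - ψ 0‖ ≤ M * ‖h - 0‖ := by
    refine Convex.norm_image_sub_le_of_norm_deriv_le (fun t _ => hψ t)
      ?_ (convex_closedBall (0:ℂ) 1) (mem_closedBall_self (by norm_num)) ?_
    · exact fun t ht => hder t ht
    · rwa [mem_closedBall, dist_zero_right]
  have hid : φ h - φ 0 - h * deriv φ 0 = h * (ψ h - ψ 0) := by
    have h1 : (h - 0) • dslope φ 0 h = φ h - φ 0 := sub_smul_dslope φ 0 h
    have h2 : ψ 0 = deriv φ 0 := dslope_same φ 0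
    simp only [sub_zero, smul_eq_mul] at h1
    rw [← h2, ← h1, hψdef]; ring
  rw [hid, norm_mul]
  calc ‖h‖ * ‖ψ h - ψ 0‖ ≤ ‖h‖ * (M * ‖h‖) := by
        apply mul_le_mul_of_nonneg_left _ (norm_nonneg _)
        simpa using hmvt
  _ = M * ‖h‖^2 := by ring

section SCV

variable {N : ℕ}

private abbrev Ec (N : ℕ) := Fin N → ℂ

lemma hasDerivAt_along {f : Ec N → ℂ} (hf : Differentiable ℂ f) (z u : Ec N) (t : ℂ) :
    HasDerivAt (fun s : ℂ => f (z + s • u)) (fderiv ℂ f (z + t • u) u) t := by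
  have hline : HasDerivAt (fun s : ℂ => z + s • u) u t := by
    simpa using ((hasDerivAt_id t).smul_const u).const_add z
  simpa [Function.comp_def] using ((hf _).hasFDerivAt.comp_hasDerivAt t hline)

/-- Key SCV regularity result: for entire `f : ℂ^N → ℂ`, the directional derivative
function `z ↦ fderiv ℂ f z v` is entire as well. -/
theorem differentiableAt_fderiv_apply {f : Ec N → ℂ}
    (hf : Differentiable ℂ f) (v z₀ : Ec N) :
    DifferentiableAt ℂ (fun z => fderiv ℂ f z v) z₀ := by
  classical
  set P : Ec N → ℂ := fun z => fderiv ℂ f z v with hP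
  set h : ℕ → ℂ := fun n => ((n : ℂ) + 1)⁻¹ with hh
  have hn0 : ∀ n, h n ≠ 0 := by
    intro n
    simp only [hh, ne_eq, inv_eq_zero]
    exact Nat.cast_add_one_ne_zero n
  have hnorm1 : ∀ n, ‖h n‖ ≤ 1 := by
    intro n
    simp only [hh, norm_inv]
    rw [inv_le_one_iff₀]
    right
    calc (1:ℝ) = ‖(1:ℂ)‖ := by simp
    _ ≤ ‖(n:ℂ) + 1‖ := by
        have : ((n:ℂ) + 1) = ((n + 1 : ℕ) : ℂ) := by push_cast; ring
        rw [this, Complex.norm_natCast]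
        exact_mod_cast Nat.one_le_iff_ne_zero.mpr (Nat.succ_ne_zero n)
  have hnormval : ∀ n, ‖h n‖ = ((n:ℝ) + 1)⁻¹ := by
    intro n
    simp only [hh, norm_inv]
    congr 1
    have : ((n:ℂ) + 1) = ((n + 1 : ℕ) : ℂ) := by push_cast; ring
    rw [this, Complex.norm_natCast]; push_cast; ring
  have htend0 : Tendsto (fun n => ‖h n‖) atTop (𝓝 0) := by
    simp only [hnormval]
    exact tendsto_one_div_add_atTop_nhds_zero_nat.congr (by intro n; rw [one_div])
  set D : ℕ → Ec N → ℂ := fun n z => (h n)⁻¹ * (f (z + h n • v) - f z) with hD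
  set F : ℕ → Ec N → (Ec N →L[ℂ] ℂ) :=
    fun n z => (h n)⁻¹ • (fderiv ℂ f (z + h n • v) - fderiv ℂ f z) with hF
  -- each D n is entire with derivative F n
  have hDdiff : ∀ n z, HasFDerivAt (D n) (F n z) z := by
    intro n z
    have h1 : HasFDerivAt (fun z => f (z + h n • v)) (fderiv ℂ f (z + h n • v)) z := by
      have := (hf (z + h n • v)).hasFDerivAt.comp z
        ((hasFDerivAt_id z).add_const (h n • v))
      simpa [Function.comp_def] using this
    have h2 := (h1.sub (hf z).hasFDerivAt).const_smul ((h n)⁻¹)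
    exact h2
  have hDentire : ∀ n, Differentiable ℂ (D n) := fun n z => (hDdiff n z).differentiableAt
  -- global bound M for f on a big compact ball
  obtain ⟨M, hM⟩ := (isCompact_closedBall z₀ (2 + 3 * ‖v‖)).exists_bound_of_continuousOn
    hf.continuous.continuousOn
  have hM0 : 0 ≤ M := le_trans (norm_nonneg _)
    (hM z₀ (mem_closedBall_self (by positivity)))
  -- pointwise quantitative estimate on the ball of radius 2
  have estA : ∀ n, ∀ z ∈ closedBall z₀ 2, ‖D n z - P z‖ ≤ M * ‖h n‖ := by
    intro n z hz
    rw [mem_closedBall] at hz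
    set φ : ℂ → ℂ := fun t => f (z + t • v) with hφdef
    have hφ : Differentiable ℂ φ := by
      intro t; exact (hasDerivAt_along hf z v t).differentiableAt
    have hφbound : ∀ s : ℂ, ‖s‖ ≤ 3 → ‖φ s‖ ≤ M := by
      intro s hs
      apply hM
      rw [mem_closedBall]
      calc dist (z + s • v) z₀ ≤ dist (z + s • v) z + dist z z₀ := dist_triangle _ _ _
      _ ≤ 3 * ‖v‖ + 2 := by
          apply add_le_add _ hz
          rw [dist_eq_norm]
          simp only [add_sub_cancel_left, norm_smul]
          exact mul_le_mul_of_nonneg_right hs (norm_nonneg v)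
      _ = 2 + 3 * ‖v‖ := by ring
    have hder0 : deriv φ 0 = P z := by
      have := (hasDerivAt_along hf z v 0).deriv
      simpa [hφdef, hP] using this
    have key := oneD_est hφ hφbound (hnorm1 n)
    rw [hder0] at key
    have hexp : D n z - P z = (h n)⁻¹ * (φ (h n) - φ 0 - h n * P z) := by
      simp only [hD, hφdef, zero_smul, add_zero]
      have hc : (h n)⁻¹ * (h n) = 1 := inv_mul_cancel₀ (hn0 n)
      linear_combination (P z) * hc
    rw [hexp, norm_mul, norm_inv]
    calc ‖h n‖⁻¹ * ‖φ (h n) - φ 0 - h n * P z‖ ≤ ‖h n‖⁻¹ * (M * ‖h n‖^2) := by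
          apply mul_le_mul_of_nonneg_left key (by positivity)
    _ = M * ‖h n‖ * (‖h n‖⁻¹ * ‖h n‖) := by ring
    _ ≤ M * ‖h n‖ * 1 := by
          apply mul_le_mul_of_nonneg_left _ (by positivity)
          rcases eq_or_ne (h n) 0 with h0 | h0
          · simp [h0]
          · rw [inv_mul_cancel₀ (norm_ne_zero_iff.mpr h0)]
    _ = M * ‖h n‖ := by ring
  -- uniform Cauchy estimate for F on the ball of radius 1
  have estB : ∀ n m, ∀ z ∈ closedBall z₀ 1,
      ‖F n z - F m z‖ ≤ 2 * M * (‖h n‖ + ‖h m‖) := by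
    intro n m z hz
    rw [mem_closedBall] at hz
    refine ContinuousLinearMap.opNorm_le_bound _ (by positivity) ?_
    intro u
    rcases eq_or_ne u 0 with hu | hu
    · simp [hu]
    have hu0 : (0:ℝ) < ‖u‖ := norm_pos_iff.mpr hu
    -- 1D function along direction u
    set χ : ℂ → ℂ := fun t => D n (z + t • u) - D m (z + t • u) with hχdef
    have hχ : Differentiable ℂ χ := by
      intro t
      exact ((hasDerivAt_along (hDentire n) z u t).sub
        (hasDerivAt_along (hDentire m) z u t)).differentiableAt
    have hχder : deriv χ 0 = (F n z - F m z) u := by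
      have h1 := ((hasDerivAt_along (hDentire n) z u 0).sub
        (hasDerivAt_along (hDentire m) z u 0)).deriv
      have e1 : fderiv ℂ (D n) z = F n z := (hDdiff n z).fderiv
      have e2 : fderiv ℂ (D m) z = F m z := (hDdiff m z).fderiv
      simp only [hχdef] at h1 ⊢
      rw [show (fun t => D n (z + t • u) - D m (z + t • u)) =
        ((fun s => D n (z + s • u)) - fun s => D m (z + s • u)) from rfl, h1]
      simp only [zero_smul, add_zero, e1, e2, ContinuousLinearMap.sub_apply]
    have hbound : ∀ s : ℂ, ‖s‖ = ‖u‖⁻¹ → ‖χ s‖ ≤ 2 * M * (‖h n‖ + ‖h m‖) := by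
      intro s hs
      have hw : z + s • u ∈ closedBall z₀ 2 := by
        rw [mem_closedBall]
        calc dist (z + s • u) z₀ ≤ dist (z + s • u) z + dist z z₀ := dist_triangle _ _ _
        _ ≤ 1 + 1 := by
            apply add_le_add _ hz
            rw [dist_eq_norm]
            simp only [add_sub_cancel_left, norm_smul, hs]
            rw [inv_mul_cancel₀ (ne_of_gt hu0)]
        _ = 2 := by norm_num
      have hn' := estA n _ hw
      have hm' := estA m _ hw
      calc ‖χ s‖ = ‖(D n (z + s•u) - P (z + s•u)) - (D m (z + s•u) - P (z + s•u))‖ := by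
            simp only [hχdef]; congr 1; ring
      _ ≤ ‖D n (z + s•u) - P (z + s•u)‖ + ‖D m (z + s•u) - P (z + s•u)‖ := norm_sub_le _ _
      _ ≤ M * ‖h n‖ + M * ‖h m‖ := add_le_add hn' hm'
      _ ≤ 2 * M * (‖h n‖ + ‖h m‖) := by nlinarith [norm_nonneg (h n), norm_nonneg (h m)]
    have := cauchy_est hχ (by positivity : (0:ℝ) < ‖u‖⁻¹) hbound
    rw [hχder] at this
    calc ‖(F n z - F m z) u‖ ≤ 2 * M * (‖h n‖ + ‖h m‖) / ‖u‖⁻¹ := this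
    _ = 2 * M * (‖h n‖ + ‖h m‖) * ‖u‖ := by field_simp
  -- uniform Cauchy sequence on the ball
  have hUC : UniformCauchySeqOn F atTop (ball z₀ 1) := by
    rw [Metric.uniformCauchySeqOn_iff]
    intro ε hε
    obtain ⟨K, hK⟩ : ∃ K : ℕ, 4 * M * ((K:ℝ) + 1)⁻¹ < ε := by
      have : Tendsto (fun n : ℕ => 4 * M * ((n:ℝ)+1)⁻¹) atTop (𝓝 0) := by
        have h0 : Tendsto (fun n : ℕ => ((n:ℝ)+1)⁻¹) atTop (𝓝 0) := by
          exact tendsto_one_div_add_atTop_nhds_zero_nat.congr (by intro n; rw [one_div])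
        simpa using h0.const_mul (4 * M)
      have := (this.eventually (eventually_lt_nhds hε)).exists
      simpa using this
    refine ⟨K, fun m hm n hn z hz => ?_⟩
    rw [dist_eq_norm]
    have hz' : z ∈ closedBall z₀ 1 := ball_subset_closedBall hz
    have := estB m n z hz'
    have hmm : ‖h m‖ ≤ ((K:ℝ)+1)⁻¹ := by
      rw [hnormval]
      have : (K:ℝ) ≤ (m:ℝ) := by exact_mod_cast hm
      apply inv_anti₀ (by positivity)
      linarith
    have hnn : ‖h n‖ ≤ ((K:ℝ)+1)⁻¹ := by
      rw [hnormval]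
      have : (K:ℝ) ≤ (n:ℝ) := by exact_mod_cast hn
      apply inv_anti₀ (by positivity)
      linarith
    calc ‖F m z - F n z‖ ≤ 2 * M * (‖h m‖ + ‖h n‖) := this
    _ ≤ 2 * M * (((K:ℝ)+1)⁻¹ + ((K:ℝ)+1)⁻¹) := by
        apply mul_le_mul_of_nonneg_left (add_le_add hmm hnn) (by positivity)
    _ = 4 * M * ((K:ℝ)+1)⁻¹ := by ring
    _ < ε := hK
  -- pointwise limits
  have hptC : ∀ z ∈ ball z₀ 1, CauchySeq (fun n => F n z) :=
    fun z hz => hUC.cauchySeq hz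
  set Φ : Ec N → (Ec N →L[ℂ] ℂ) := fun z => limUnder atTop (fun n => F n z) with hΦdef
  have hΦ : ∀ z ∈ ball z₀ 1, Tendsto (fun n => F n z) atTop (𝓝 (Φ z)) :=
    fun z hz => (hptC z hz).tendsto_limUnder
  have hunif : TendstoUniformlyOn F Φ atTop (ball z₀ 1) :=
    hUC.tendstoUniformlyOn_of_tendsto hΦ
  have hDP : ∀ z ∈ ball z₀ 1, Tendsto (fun n => D n z) atTop (𝓝 (P z)) := by
    intro z hz
    have hz2 : z ∈ closedBall z₀ 2 :=
      closedBall_subset_closedBall (by norm_num) (ball_subset_closedBall hz)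
    rw [tendsto_iff_norm_sub_tendsto_zero]
    refine squeeze_zero_norm (fun n => ?_) (by simpa using htend0.const_mul M)
    simpa [norm_norm] using estA n z hz2
  have hfin : HasFDerivAt P (Φ z₀) z₀ :=
    hasFDerivAt_of_tendstoUniformlyOn isOpen_ball hunif
      (fun n z hz => hDdiff n z) hDP (mem_ball_self one_pos)
  exact hfin.differentiableAt

end SCV

-- B part: to be appended after defs
namespace Anyon

open Complex

variable {N : ℕ}

lemma zC_sub (v w : Fin 2 → ℝ) : zC (v - w) = zC v - zC w := by
  simp [zC, Pi.sub_apply]; ring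

lemma zC_re (v : Fin 2 → ℝ) : (zC v).re = v 0 := by simp [zC]
lemma zC_im (v : Fin 2 → ℝ) : (zC v).im = v 1 := by simp [zC]

lemma nrm_sq (v : Fin 2 → ℝ) : nrm v ^ 2 = Complex.normSq (zC v) := by
  unfold nrm
  rw [Real.sq_sqrt (by positivity)]
  rw [Complex.normSq_apply, zC_re, zC_im]
  ring

lemma nrm_eq_abs (v : Fin 2 → ℝ) : nrm v = ‖zC v‖ := by
  unfold nrm
  rw [Complex.norm_def, Complex.normSq_apply, zC_re, zC_im]
  congr 1; ring

/-- `zC` as a continuous linear map. -/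
noncomputable def Zc2 : (Fin 2 → ℝ) →L[ℝ] ℂ :=
  Complex.ofRealCLM.comp (ContinuousLinearMap.proj 0) +
    Complex.I • Complex.ofRealCLM.comp (ContinuousLinearMap.proj 1)

lemma Zc2_apply (v : Fin 2 → ℝ) : Zc2 v = zC v := by
  simp [Zc2, zC]
  ring

/-- The complexification map `Conf N → ℂ^N` as a continuous linear map. -/
noncomputable def Wm (N : ℕ) : Conf N →L[ℝ] (Fin N → ℂ) :=
  ContinuousLinearMap.pi fun j => Zc2.comp (ContinuousLinearMap.proj j)

lemma Wm_apply (y : Conf N) (j : Fin N) : Wm N y j = zC (y j) := by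
  simp [Wm, Zc2_apply]

/-- Complex coefficients of the two basic directions. -/
noncomputable def cc : Fin 2 → ℂ := ![1, Complex.I]

lemma Wm_evec (j : Fin N) (i : Fin 2) : Wm N (evec j i) = Pi.single j (cc i) := by
  funext k
  rw [Wm_apply]
  by_cases hk : k = j
  · subst hk
    fin_cases i
    · simp [evec, zC, cc]
    · simp [evec, zC, cc]
  · rw [Pi.single_eq_of_ne hk]
    simp [evec, hk, zC]

lemma Wm_sub_pair (y : Conf N) (a b : Fin N) :
    Wm N y a - Wm N y b = zC (y a - y b) := by
  rw [zC_sub, Wm_apply, Wm_apply]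

/-- The good (open) set: complement of the fat diagonal. -/
lemma isOpen_compl_fatDiag : IsOpen (fatDiag N)ᶜ := by
  have h1 : fatDiag N = ⋃ p : {p : Fin N × Fin N // p.1 ≠ p.2},
      {y : Conf N | y p.1.1 = y p.1.2} := by
    ext y
    simp only [fatDiag, Set.mem_setOf_eq, Set.mem_iUnion]
    constructor
    · rintro ⟨j, k, hjk, he⟩; exact ⟨⟨(j, k), hjk⟩, he⟩
    · rintro ⟨⟨⟨j, k⟩, hjk⟩, he⟩; exact ⟨j, k, hjk, he⟩
  rw [h1]
  rw [isOpen_compl_iff]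
  apply isClosed_iUnion_of_finite
  intro p
  exact isClosed_eq (continuous_apply p.1.1) (continuous_apply p.1.2)

lemma mem_compl_fatDiag_iff (x : Conf N) :
    x ∈ (fatDiag N)ᶜ ↔ ∀ j k : Fin N, j ≠ k → x j ≠ x k := by
  simp only [Set.mem_compl_iff, fatDiag, Set.mem_setOf_eq]
  push_neg
  tauto

/-- pd via a known derivative. -/
lemma pd_eq {f : Conf N → ℂ} {L : Conf N →L[ℝ] ℂ} {x : Conf N} (h : HasFDerivAt f L x)
    (j : Fin N) (i : Fin 2) : pd j i f x = L (evec j i) := by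
  unfold pd; rw [h.fderiv]

lemma pd_congr {f f' : Conf N → ℂ} {x : Conf N} {s : Set (Conf N)} (hs : IsOpen s)
    (hx : x ∈ s) (h : ∀ y ∈ s, f y = f' y) (j : Fin N) (i : Fin 2) :
    pd j i f x = pd j i f' x := by
  unfold pd
  rw [Filter.EventuallyEq.fderiv_eq (Filter.eventuallyEq_of_mem (hs.mem_nhds hx) h)]

/-- Sum over `k ≠ j` of inverse differences. -/
noncomputable def Sfun (j : Fin N) (z : Fin N → ℂ) : ℂ :=
  ∑ k ∈ Finset.univ.filter (fun k => k ≠ j), (z j - z k)⁻¹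

noncomputable def Rfun (β : ℝ) (z : Fin N → ℂ) : ℝ :=
  ∏ p ∈ Finset.univ.filter (fun p : Fin N × Fin N => p.1 < p.2),
    ‖z p.1 - z p.2‖ ^ β

/-- Avec in complex terms. -/
lemma Avec_eq_im (j : Fin N) (y : Conf N) :
    Avec j y 0 = (Sfun j (Wm N y)).im := by
  unfold Avec Sfun
  rw [Finset.sum_apply]
  rw [Complex.im_sum]
  apply Finset.sum_congr rfl
  intro k _
  rw [Wm_sub_pair]
  have h0 : perp (y j - y k) 0 = -((y j - y k) 1) := by simp [perp]
  rw [Pi.smul_apply, h0, smul_eq_mul, Complex.inv_im, ← nrm_sq, zC_im]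
  by_cases hz : nrm (y j - y k) = 0
  · rw [hz]; simp
  · field_simp

lemma Avec_eq_re (j : Fin N) (y : Conf N) :
    Avec j y 1 = (Sfun j (Wm N y)).re := by
  unfold Avec Sfun
  rw [Finset.sum_apply]
  rw [Complex.re_sum]
  apply Finset.sum_congr rfl
  intro k _
  rw [Wm_sub_pair]
  have h0 : perp (y j - y k) 1 = (y j - y k) 0 := by simp [perp]
  rw [Pi.smul_apply, h0, smul_eq_mul, Complex.inv_re, ← nrm_sq, zC_re]
  by_cases hz : nrm (y j - y k) = 0
  · rw [hz]; simp
  · field_simp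

/-- The key reindexing identity for pair sums. -/
lemma sum_pairs_single (z : Fin N → ℂ) (j : Fin N) (c : ℂ) :
    ∑ p ∈ Finset.univ.filter (fun p : Fin N × Fin N => p.1 < p.2),
      ((Pi.single j c : Fin N → ℂ) p.1 - (Pi.single j c : Fin N → ℂ) p.2) * (z p.1 - z p.2)⁻¹
      = c * Sfun j z := by
  classical
  set P := Finset.univ.filter (fun p : Fin N × Fin N => p.1 < p.2) with hP
  set T : Fin N × Fin N → ℂ :=
    fun p => ((Pi.single j c : Fin N → ℂ) p.1 - (Pi.single j c : Fin N → ℂ) p.2) *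
      (z p.1 - z p.2)⁻¹ with hT
  rw [← Finset.sum_filter_add_sum_filter_not P (fun p => p.1 = j) T]
  have e1 : ∑ p ∈ P.filter (fun p => p.1 = j), T p
      = ∑ k ∈ Finset.univ.filter (fun k => j < k), c * (z j - z k)⁻¹ := by
    refine Finset.sum_bij' (fun p _ => p.2) (fun k _ => (j, k)) ?_ ?_ ?_ ?_ ?_
    · intro p hp
      simp only [Finset.mem_filter, hP, Finset.mem_univ, true_and] at hp
      simp only [Finset.mem_filter, Finset.mem_univ, true_and]
      rw [← hp.2]; exact hp.1
    · intro k hk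
      simp only [Finset.mem_filter, Finset.mem_univ, true_and] at hk
      simp only [Finset.mem_filter, hP, Finset.mem_univ, true_and]
      exact ⟨hk, trivial⟩
    · intro p hp
      simp only [Finset.mem_filter, hP, Finset.mem_univ, true_and] at hp
      exact Prod.ext hp.2.symm rfl
    · intro k _; rfl
    · intro p hp
      simp only [Finset.mem_filter, hP, Finset.mem_univ, true_and] at hp
      have hne : p.2 ≠ j := by rw [← hp.2]; exact (ne_of_gt hp.1)
      show ((Pi.single j c : Fin N → ℂ) p.1 - (Pi.single j c : Fin N → ℂ) p.2) * (z p.1 - z p.2)⁻¹ = _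
      have hv1 : (Pi.single j c : Fin N → ℂ) p.1 = c := by rw [hp.2]; exact Pi.single_eq_same (M := fun _ => ℂ) j c
      have hv2 : (Pi.single j c : Fin N → ℂ) p.2 = 0 := Pi.single_eq_of_ne (M := fun _ => ℂ) hne c
      rw [hv1, hv2, hp.2]
      ring
  have e2 : ∑ p ∈ P.filter (fun p => ¬ p.1 = j), T p
      = ∑ k ∈ Finset.univ.filter (fun k => k < j), c * (z j - z k)⁻¹ := by
    rw [← Finset.sum_filter_add_sum_filter_not (P.filter (fun p => ¬ p.1 = j))
      (fun p => p.2 = j) T]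
    have e2b : ∑ p ∈ (P.filter (fun p => ¬ p.1 = j)).filter (fun p => ¬ p.2 = j), T p = 0 := by
      apply Finset.sum_eq_zero
      intro p hp
      simp only [Finset.mem_filter] at hp
      show ((Pi.single j c : Fin N → ℂ) p.1 - (Pi.single j c : Fin N → ℂ) p.2) * (z p.1 - z p.2)⁻¹ = 0
      have hv1 : (Pi.single j c : Fin N → ℂ) p.1 = 0 := Pi.single_eq_of_ne (M := fun _ => ℂ) hp.1.2 c
      have hv2 : (Pi.single j c : Fin N → ℂ) p.2 = 0 := Pi.single_eq_of_ne (M := fun _ => ℂ) hp.2 c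
      rw [hv1, hv2]
      simp
    rw [e2b, add_zero]
    refine Finset.sum_bij' (fun p _ => p.1) (fun k _ => (k, j)) ?_ ?_ ?_ ?_ ?_
    · intro p hp
      simp only [Finset.mem_filter, hP, Finset.mem_univ, true_and] at hp
      simp only [Finset.mem_filter, Finset.mem_univ, true_and]
      rw [← hp.2]; exact hp.1.1
    · intro k hk
      simp only [Finset.mem_filter, Finset.mem_univ, true_and] at hk
      simp only [Finset.mem_filter, hP, Finset.mem_univ, true_and]
      exact ⟨⟨hk, ne_of_lt hk⟩, trivial⟩
    · intro p hp
      simp only [Finset.mem_filter, hP, Finset.mem_univ, true_and] at hp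
      exact Prod.ext rfl hp.2.symm
    · intro k _; rfl
    · intro p hp
      simp only [Finset.mem_filter, hP, Finset.mem_univ, true_and] at hp
      have hne : p.1 ≠ j := hp.1.2
      show ((Pi.single j c : Fin N → ℂ) p.1 - (Pi.single j c : Fin N → ℂ) p.2) * (z p.1 - z p.2)⁻¹ = _
      have hv1 : (Pi.single j c : Fin N → ℂ) p.1 = 0 := Pi.single_eq_of_ne (M := fun _ => ℂ) hne c
      have hv2 : (Pi.single j c : Fin N → ℂ) p.2 = c := by rw [hp.2]; exact Pi.single_eq_same (M := fun _ => ℂ) j c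
      rw [hv1, hv2, hp.2]
      have h1 : (z p.1 - z j)⁻¹ = -(z j - z p.1)⁻¹ := by
        rw [← inv_neg, neg_sub]
      rw [h1]
      ring
  rw [e1, e2]
  unfold Sfun
  rw [Finset.mul_sum]
  rw [← Finset.sum_filter_add_sum_filter_not (Finset.univ.filter (fun k => k ≠ j))
    (fun k => j < k) (fun k => c * (z j - z k)⁻¹)]
  congr 1
  · apply Finset.sum_congr _ (fun _ _ => rfl)
    rw [Finset.filter_filter]
    apply Finset.filter_congr
    intro k _
    simp only [ne_eq]
    constructor
    · exact fun h => ⟨ne_of_gt h, h⟩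
    · exact fun h => h.2
  · apply Finset.sum_congr _ (fun _ _ => rfl)
    rw [Finset.filter_filter]
    apply Finset.filter_congr
    intro k _
    simp only [ne_eq]
    constructor
    · exact fun h => ⟨ne_of_lt h, not_lt_of_gt h⟩
    · exact fun h => (lt_or_gt_of_ne h.1).resolve_right h.2

end Anyon

set_option maxHeartbeats 1000000

namespace Anyon

open Complex

variable {N : ℕ}

/-- Derivative of `log ∘ abs` on `ℂ \ {0}`. -/
noncomputable def dlog (w : ℂ) : ℂ →L[ℝ] ℝ :=
  Complex.reCLM.comp (w⁻¹ • (ContinuousLinearMap.id ℝ ℂ))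

lemma dlog_apply (w u : ℂ) : dlog w u = (w⁻¹ * u).re := by
  simp [dlog]

lemma hasFDerivAt_logabs {w : ℂ} (hw : w ≠ 0) :
    HasFDerivAt (fun w : ℂ => Real.log ‖w‖) (dlog w) w := by
  have hfun : (fun w : ℂ => Real.log ‖w‖)
      = fun w : ℂ => (1/2 : ℝ) * Real.log (w.re * w.re + w.im * w.im) := by
    funext u
    rw [Complex.norm_def, Real.log_sqrt (Complex.normSq_nonneg u), Complex.normSq_apply]
    ring
  rw [hfun]
  have hns0 : w.re * w.re + w.im * w.im ≠ 0 := by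
    have := Complex.normSq_pos.mpr hw
    rw [Complex.normSq_apply] at this
    exact ne_of_gt this
  have h1 := (Complex.reCLM.hasFDerivAt (x := w)).mul (Complex.reCLM.hasFDerivAt (x := w))
  have h2 := (Complex.imCLM.hasFDerivAt (x := w)).mul (Complex.imCLM.hasFDerivAt (x := w))
  have h3 := ((h1.add h2).log hns0).const_mul (1/2 : ℝ)
  refine h3.congr_fderiv ?_
  ext u
  simp only [dlog, ContinuousLinearMap.coe_comp', Function.comp_apply,
    ContinuousLinearMap.smul_apply, ContinuousLinearMap.coe_id', id_eq,
    Complex.reCLM_apply, Complex.imCLM_apply, ContinuousLinearMap.add_apply,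
    ContinuousLinearMap.coe_smul', Pi.smul_apply, smul_eq_mul, Pi.add_apply, Pi.mul_apply]
  rw [Complex.mul_re, Complex.inv_re, Complex.inv_im, Complex.normSq_apply]
  field_simp
  ring

/-- The difference-of-coordinates continuous linear map. -/
noncomputable def dpair (N : ℕ) (p : Fin N × Fin N) : (Fin N → ℂ) →L[ℝ] ℂ :=
  (ContinuousLinearMap.proj (R := ℝ) (φ := fun _ : Fin N => ℂ) p.1) -
    (ContinuousLinearMap.proj (R := ℝ) (φ := fun _ : Fin N => ℂ) p.2)

lemma dpair_apply (p : Fin N × Fin N) (u : Fin N → ℂ) :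
    dpair N p u = u p.1 - u p.2 := rfl

/-- Derivative of the sum of logs. -/
noncomputable def DLog (N : ℕ) (z : Fin N → ℂ) : (Fin N → ℂ) →L[ℝ] ℝ :=
  ∑ p ∈ Finset.univ.filter (fun p : Fin N × Fin N => p.1 < p.2),
    (dlog (z p.1 - z p.2)).comp (dpair N p)

lemma hasFDerivAt_logsum {z : Fin N → ℂ} (hz : ∀ a b : Fin N, a ≠ b → z a ≠ z b) :
    HasFDerivAt (fun z : Fin N → ℂ =>
      ∑ p ∈ Finset.univ.filter (fun p : Fin N × Fin N => p.1 < p.2),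
        Real.log ‖z p.1 - z p.2‖) (DLog N z) z := by
  apply HasFDerivAt.fun_sum
  intro p hp
  simp only [Finset.mem_filter, Finset.mem_univ, true_and] at hp
  have hne : z p.1 - z p.2 ≠ 0 := sub_ne_zero.mpr (hz _ _ (ne_of_lt hp))
  exact (hasFDerivAt_logabs hne).comp z ((dpair N p).hasFDerivAt)

lemma Rfun_eq_exp {β : ℝ} {z : Fin N → ℂ} (hz : ∀ a b : Fin N, a ≠ b → z a ≠ z b) :
    Rfun β z = Real.exp (β *
      ∑ p ∈ Finset.univ.filter (fun p : Fin N × Fin N => p.1 < p.2),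
        Real.log ‖z p.1 - z p.2‖) := by
  rw [Finset.mul_sum, Real.exp_sum]
  unfold Rfun
  apply Finset.prod_congr rfl
  intro p hp
  simp only [Finset.mem_filter, Finset.mem_univ, true_and] at hp
  have hne : z p.1 - z p.2 ≠ 0 := sub_ne_zero.mpr (hz _ _ (ne_of_lt hp))
  have habs : 0 < ‖z p.1 - z p.2‖ := norm_pos_iff.mpr hne
  rw [Real.rpow_def_of_pos habs]
  rw [mul_comm]

/-- Derivative of `Rfun`. -/
noncomputable def DR (β : ℝ) (z : Fin N → ℂ) : (Fin N → ℂ) →L[ℝ] ℝ :=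
  (Rfun β z * β) • DLog N z

lemma hasFDerivAt_RW (β : ℝ) {x : Conf N} (hx : x ∈ (fatDiag N)ᶜ) :
    HasFDerivAt (fun y : Conf N => Rfun β (Wm N y)) ((DR β (Wm N x)).comp (Wm N)) x := by
  have hsep := (mem_compl_fatDiag_iff x).mp hx
  have hzd : ∀ a b : Fin N, a ≠ b → Wm N x a ≠ Wm N x b := by
    intro a b hab
    rw [Wm_apply, Wm_apply]
    intro he
    apply hsep a b hab
    have hre := congrArg Complex.re he
    have him := congrArg Complex.im he
    rw [zC_re, zC_re] at hre
    rw [zC_im, zC_im] at him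
    funext i
    fin_cases i
    · exact hre
    · exact him
  have h1 := ((hasFDerivAt_logsum hzd).const_mul β).exp
  have h2 := h1.comp x (Wm N).hasFDerivAt
  have h3 : HasFDerivAt (fun y : Conf N => Rfun β (Wm N y))
      ((Real.exp (β * ∑ p ∈ Finset.univ.filter (fun p : Fin N × Fin N => p.1 < p.2),
        Real.log ‖Wm N x p.1 - Wm N x p.2‖) • (β • DLog N (Wm N x))).comp
        (Wm N)) x := by
    refine h2.congr_of_eventuallyEq ?_
    have hmem : (fatDiag N)ᶜ ∈ nhds x := isOpen_compl_fatDiag.mem_nhds hx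
    filter_upwards [hmem] with y hy
    have hzd' : ∀ a b : Fin N, a ≠ b → Wm N y a ≠ Wm N y b := by
      have hsep' := (mem_compl_fatDiag_iff y).mp hy
      intro a b hab
      rw [Wm_apply, Wm_apply]
      intro he
      apply hsep' a b hab
      have hre := congrArg Complex.re he
      have him := congrArg Complex.im he
      rw [zC_re, zC_re] at hre
      rw [zC_im, zC_im] at him
      funext i
      fin_cases i
      · exact hre
      · exact him
    exact Rfun_eq_exp hzd'
  refine h3.congr_fderiv ?_
  unfold DR
  rw [← Rfun_eq_exp hzd, smul_smul]

lemma DR_evec (β : ℝ) (x : Conf N) (j : Fin N) (i : Fin 2) :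
    ((DR β (Wm N x)).comp (Wm N)) (evec j i)
      = Rfun β (Wm N x) * β * ((cc i) * Sfun j (Wm N x)).re := by
  rw [ContinuousLinearMap.comp_apply, Wm_evec]
  unfold DR DLog
  rw [ContinuousLinearMap.smul_apply, ContinuousLinearMap.sum_apply]
  have hsum : ∑ p ∈ Finset.univ.filter (fun p : Fin N × Fin N => p.1 < p.2),
      ((dlog (Wm N x p.1 - Wm N x p.2)).comp (dpair N p)) (Pi.single j (cc i))
      = ((cc i) * Sfun j (Wm N x)).re := by
    rw [← sum_pairs_single (Wm N x) j (cc i), Complex.re_sum]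
    apply Finset.sum_congr rfl
    intro p _
    rw [ContinuousLinearMap.comp_apply, dpair_apply, dlog_apply]
    congr 1
    ring
  rw [hsum, smul_eq_mul]

end Anyon

namespace Anyon

open Complex

variable {N : ℕ}

lemma restrict_single (j : Fin N) (L : (Fin N → ℂ) →L[ℂ] ℂ) (c : ℂ) :
    (L.restrictScalars ℝ) (Pi.single j c) = c * L (Pi.single j 1) := by
  have h0 : (L.restrictScalars ℝ) (Pi.single j c) = L (Pi.single j c) := rfl
  have h : (Pi.single j c : Fin N → ℂ) = c • (Pi.single j (1:ℂ) : Fin N → ℂ) := by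
    rw [← Pi.single_smul, smul_eq_mul, mul_one]
  rw [h0, h, _root_.map_smul, smul_eq_mul]

lemma hasFDerivAt_mulRW (β : ℝ) {q : (Fin N → ℂ) → ℂ} {Lq : (Fin N → ℂ) →L[ℝ] ℂ} {x : Conf N}
    (hx : x ∈ (fatDiag N)ᶜ) (hq : HasFDerivAt q Lq (Wm N x)) :
    HasFDerivAt (fun y : Conf N => ((Rfun β (Wm N y) : ℝ) : ℂ) * q (Wm N y))
      ((((Rfun β (Wm N x) : ℝ) : ℂ)) • (Lq.comp (Wm N)) + q (Wm N x) •
        (Complex.ofRealCLM.comp ((DR β (Wm N x)).comp (Wm N)))) x := by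
  have hR := hasFDerivAt_RW (N := N) β hx
  have hRc := Complex.ofRealCLM.hasFDerivAt.comp x hR
  have hqW := hq.comp x (Wm N).hasFDerivAt
  exact hRc.mul hqW

lemma pd_mulRW (β : ℝ) {q : (Fin N → ℂ) → ℂ} {Lq : (Fin N → ℂ) →L[ℝ] ℂ} {x : Conf N}
    (hx : x ∈ (fatDiag N)ᶜ) (hq : HasFDerivAt q Lq (Wm N x)) (j : Fin N) (i : Fin 2) :
    pd j i (fun y : Conf N => ((Rfun β (Wm N y) : ℝ) : ℂ) * q (Wm N y)) x
      = ((Rfun β (Wm N x) : ℝ) : ℂ) * Lq (Pi.single j (cc i))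
        + q (Wm N x) * ((Rfun β (Wm N x) * β * ((cc i) * Sfun j (Wm N x)).re : ℝ) : ℂ) := by
  rw [pd_eq (hasFDerivAt_mulRW β hx hq) j i]
  rw [ContinuousLinearMap.add_apply, ContinuousLinearMap.smul_apply,
    ContinuousLinearMap.smul_apply, ContinuousLinearMap.comp_apply, Wm_evec,
    ContinuousLinearMap.comp_apply, DR_evec]
  simp [smul_eq_mul]

/-- The `j`-partial of `g`. -/
noncomputable def Pg (g : (Fin N → ℂ) → ℂ) (j : Fin N) (z : Fin N → ℂ) : ℂ :=
  fderiv ℂ g z (Pi.single j 1)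

noncomputable def KKm (α : ℝ) (g : (Fin N → ℂ) → ℂ) (j : Fin N) : (Fin N → ℂ) → ℂ :=
  fun z => (α : ℂ) * (Sfun j z * g z) + Pg g j z

noncomputable def KKp (α : ℝ) (g : (Fin N → ℂ) → ℂ) (j : Fin N) : (Fin N → ℂ) → ℂ :=
  fun z => Pg g j z - (α : ℂ) * (Sfun j z * g z)

lemma diff_Sfun (j : Fin N) {z : Fin N → ℂ} (hz : ∀ a b : Fin N, a ≠ b → z a ≠ z b) :
    DifferentiableAt ℂ (Sfun j) z := by
  have : Sfun j = fun z : Fin N → ℂ =>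
      ∑ k ∈ Finset.univ.filter (fun k => k ≠ j), (z j - z k)⁻¹ := rfl
  rw [this]
  apply DifferentiableAt.fun_sum
  intro k hk
  simp only [Finset.mem_filter, Finset.mem_univ, true_and] at hk
  have hne : z j - z k ≠ 0 := sub_ne_zero.mpr (hz j k (Ne.symm hk))
  have hj : DifferentiableAt ℂ (fun z : Fin N → ℂ => z j) z :=
    (ContinuousLinearMap.proj (R := ℂ) (φ := fun _ : Fin N => ℂ) j).differentiableAt
  have hk' : DifferentiableAt ℂ (fun z : Fin N → ℂ => z k) z :=
    (ContinuousLinearMap.proj (R := ℂ) (φ := fun _ : Fin N => ℂ) k).differentiableAt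
  exact (hj.sub hk').inv hne

lemma diff_KKm (α : ℝ) {g : (Fin N → ℂ) → ℂ} (hg : Differentiable ℂ g) (j : Fin N)
    {z : Fin N → ℂ} (hz : ∀ a b : Fin N, a ≠ b → z a ≠ z b) :
    DifferentiableAt ℂ (KKm α g j) z := by
  have hPg : DifferentiableAt ℂ (Pg g j) z := differentiableAt_fderiv_apply hg _ z
  exact ((differentiableAt_const _).mul ((diff_Sfun j hz).mul (hg z))).add hPg

lemma diff_KKp (α : ℝ) {g : (Fin N → ℂ) → ℂ} (hg : Differentiable ℂ g) (j : Fin N)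
    {z : Fin N → ℂ} (hz : ∀ a b : Fin N, a ≠ b → z a ≠ z b) :
    DifferentiableAt ℂ (KKp α g j) z := by
  have hPg : DifferentiableAt ℂ (Pg g j) z := differentiableAt_fderiv_apply hg _ z
  exact hPg.sub ((differentiableAt_const _).mul ((diff_Sfun j hz).mul (hg z)))

lemma sep_of_mem {x : Conf N} (hx : x ∈ (fatDiag N)ᶜ) :
    ∀ a b : Fin N, a ≠ b → Wm N x a ≠ Wm N x b := by
  have hsep := (mem_compl_fatDiag_iff x).mp hx
  intro a b hab
  rw [Wm_apply, Wm_apply]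
  intro he
  apply hsep a b hab
  have hre := congrArg Complex.re he
  have him := congrArg Complex.im he
  rw [zC_re, zC_re] at hre
  rw [zC_im, zC_im] at him
  funext i
  fin_cases i
  · exact hre
  · exact him

end Anyon

namespace Anyon

open Complex

variable {N : ℕ}

lemma Dop_minus_vals (α : ℝ) {g : (Fin N → ℂ) → ℂ} (hg : Differentiable ℂ g) (j : Fin N)
    {x : Conf N} (hx : x ∈ (fatDiag N)ᶜ) :
    Dop α j 0 (fun y : Conf N => ((Rfun α (Wm N y) : ℝ) : ℂ) * g (Wm N y)) x
        = -Complex.I * (((Rfun α (Wm N x) : ℝ) : ℂ) * KKm α g j (Wm N x))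
      ∧ Dop α j 1 (fun y : Conf N => ((Rfun α (Wm N y) : ℝ) : ℂ) * g (Wm N y)) x
        = ((Rfun α (Wm N x) : ℝ) : ℂ) * KKm α g j (Wm N x) := by
  have hq : HasFDerivAt g ((fderiv ℂ g (Wm N x)).restrictScalars ℝ) (Wm N x) :=
    ((hg _).hasFDerivAt).restrictScalars ℝ
  have hpd0 := pd_mulRW α hx hq j 0
  have hpd1 := pd_mulRW α hx hq j 1
  rw [restrict_single] at hpd0 hpd1
  obtain ⟨a, b, hS⟩ : ∃ a b : ℝ, Sfun j (Wm N x) = (a : ℂ) + (b : ℂ) * Complex.I :=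
    ⟨_, _, (Complex.re_add_im _).symm⟩
  have g0 : (((1:ℂ)) * ((a : ℂ) + (b : ℂ) * Complex.I)).re = a := by simp
  have g1 : ((Complex.I) * ((a : ℂ) + (b : ℂ) * Complex.I)).re = -b := by simp
  have gim : (((a : ℂ) + (b : ℂ) * Complex.I)).im = b := by simp
  have gre : (((a : ℂ) + (b : ℂ) * Complex.I)).re = a := by simp
  constructor
  · simp only [Dop, KKm, Pg]
    rw [hpd0, Avec_eq_im]
    simp only [cc, Matrix.cons_val_zero]
    rw [hS, g0, gim]
    push_cast
    linear_combination ((Rfun α (Wm N x) : ℂ) * (α : ℂ) * (b : ℂ) * g (Wm N x)) * Complex.I_sq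
  · simp only [Dop, KKm, Pg]
    rw [hpd1, Avec_eq_re]
    simp only [cc, Matrix.cons_val_one, Matrix.head_cons, Matrix.cons_val_zero]
    rw [hS, g1, gre]
    push_cast
    linear_combination (-((Rfun α (Wm N x) : ℂ) *
      fderiv ℂ g (Wm N x) (Pi.single j 1))) * Complex.I_sq

lemma hasFDerivAt_conj_comp {f : (Fin N → ℂ) → ℂ} {L : (Fin N → ℂ) →L[ℝ] ℂ} {z : Fin N → ℂ}
    (h : HasFDerivAt f L z) :
    HasFDerivAt (fun w => conj (f w))
      ((Complex.conjCLE.toContinuousLinearMap : ℂ →L[ℝ] ℂ).comp L) z :=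
  ((Complex.conjCLE.toContinuousLinearMap : ℂ →L[ℝ] ℂ).hasFDerivAt.comp z h)

lemma Dop_plus_vals (α : ℝ) {g : (Fin N → ℂ) → ℂ} (hg : Differentiable ℂ g) (j : Fin N)
    {x : Conf N} (hx : x ∈ (fatDiag N)ᶜ) :
    Dop α j 0 (fun y : Conf N => ((Rfun (-α) (Wm N y) : ℝ) : ℂ) * conj (g (Wm N y))) x
        = -Complex.I * (((Rfun (-α) (Wm N x) : ℝ) : ℂ) * conj (KKp α g j (Wm N x)))
      ∧ Dop α j 1 (fun y : Conf N => ((Rfun (-α) (Wm N y) : ℝ) : ℂ) * conj (g (Wm N y))) x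
        = -(((Rfun (-α) (Wm N x) : ℝ) : ℂ) * conj (KKp α g j (Wm N x))) := by
  have hq0 : HasFDerivAt g ((fderiv ℂ g (Wm N x)).restrictScalars ℝ) (Wm N x) :=
    ((hg _).hasFDerivAt).restrictScalars ℝ
  have hq := hasFDerivAt_conj_comp hq0
  have hpd0 := pd_mulRW (-α) hx hq j 0
  have hpd1 := pd_mulRW (-α) hx hq j 1
  have hcval : ∀ c : ℂ, ((Complex.conjCLE.toContinuousLinearMap : ℂ →L[ℝ] ℂ).comp
      ((fderiv ℂ g (Wm N x)).restrictScalars ℝ)) (Pi.single j c)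
      = conj (c * fderiv ℂ g (Wm N x) (Pi.single j 1)) := by
    intro c
    rw [ContinuousLinearMap.comp_apply, restrict_single]
    rfl
  rw [hcval] at hpd0 hpd1
  obtain ⟨a, b, hS⟩ : ∃ a b : ℝ, Sfun j (Wm N x) = (a : ℂ) + (b : ℂ) * Complex.I :=
    ⟨_, _, (Complex.re_add_im _).symm⟩
  have g0 : (((1:ℂ)) * ((a : ℂ) + (b : ℂ) * Complex.I)).re = a := by simp
  have g1 : ((Complex.I) * ((a : ℂ) + (b : ℂ) * Complex.I)).re = -b := by simp
  have gim : (((a : ℂ) + (b : ℂ) * Complex.I)).im = b := by simp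
  have gre : (((a : ℂ) + (b : ℂ) * Complex.I)).re = a := by simp
  constructor
  · simp only [Dop, KKp, Pg]
    rw [hpd0, Avec_eq_im]
    simp only [cc, Matrix.cons_val_zero, one_mul]
    rw [hS, gre, gim]
    simp only [map_sub, map_mul, map_add, Complex.conj_ofReal, Complex.conj_I]
    push_cast
    linear_combination ((α : ℂ) * (b : ℂ) * (Rfun (-α) (Wm N x) : ℂ) *
      conj (g (Wm N x))) * Complex.I_sq
  · simp only [Dop, KKp, Pg]
    rw [hpd1, Avec_eq_re]
    simp only [cc, Matrix.cons_val_one, Matrix.head_cons, Matrix.cons_val_zero]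
    rw [hS, g1, gre]
    simp only [map_sub, map_mul, map_add, Complex.conj_ofReal, Complex.conj_I]
    push_cast
    linear_combination ((Rfun (-α) (Wm N x) : ℂ) *
      conj (fderiv ℂ g (Wm N x) (Pi.single j 1))) * Complex.I_sq

end Anyon

namespace Anyon

open Complex

variable {N : ℕ}

lemma pd_const_mul {f : Conf N → ℂ} {x : Conf N} (hf : DifferentiableAt ℝ f x) (c : ℂ)
    (j : Fin N) (i : Fin 2) : pd j i (fun y => c * f y) x = c * pd j i f x := by
  unfold pd
  rw [fderiv_const_mul hf c]
  simp

lemma D2_minus (α : ℝ) {g : (Fin N → ℂ) → ℂ} (hg : Differentiable ℂ g) (j : Fin N) {x : Conf N}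
    (hx : x ∈ (fatDiag N)ᶜ) :
    D2 α j (fun y : Conf N => ((Rfun α (Wm N y) : ℝ) : ℂ) * g (Wm N y)) x = 0 := by
  have hzd := sep_of_mem hx
  have hKd : DifferentiableAt ℂ (KKm α g j) (Wm N x) := diff_KKm α hg j hzd
  have hqK : HasFDerivAt (KKm α g j)
      ((fderiv ℂ (KKm α g j) (Wm N x)).restrictScalars ℝ) (Wm N x) :=
    (hKd.hasFDerivAt).restrictScalars ℝ
  have hHdiff : DifferentiableAt ℝ
      (fun y : Conf N => ((Rfun α (Wm N y) : ℝ) : ℂ) * KKm α g j (Wm N y)) x :=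
    (hasFDerivAt_mulRW α hx hqK).differentiableAt
  have hpd0 := pd_mulRW α hx hqK j 0
  have hpd1 := pd_mulRW α hx hqK j 1
  rw [restrict_single] at hpd0 hpd1
  have h0 : ∀ y ∈ (fatDiag N)ᶜ,
      Dop α j 0 (fun y : Conf N => ((Rfun α (Wm N y) : ℝ) : ℂ) * g (Wm N y)) y
        = -Complex.I * (((Rfun α (Wm N y) : ℝ) : ℂ) * KKm α g j (Wm N y)) :=
    fun y hy => (Dop_minus_vals α hg j hy).1
  have h1 : ∀ y ∈ (fatDiag N)ᶜ,
      Dop α j 1 (fun y : Conf N => ((Rfun α (Wm N y) : ℝ) : ℂ) * g (Wm N y)) y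
        = (1 : ℂ) * (((Rfun α (Wm N y) : ℝ) : ℂ) * KKm α g j (Wm N y)) := by
    intro y hy
    rw [(Dop_minus_vals α hg j hy).2, one_mul]
  unfold D2
  rw [Fin.sum_univ_two]
  have e0 : Dop α j 0 (fun y =>
        Dop α j 0 (fun y : Conf N => ((Rfun α (Wm N y) : ℝ) : ℂ) * g (Wm N y)) y) x
      = -Complex.I * pd j 0 (fun y =>
          Dop α j 0 (fun y : Conf N => ((Rfun α (Wm N y) : ℝ) : ℂ) * g (Wm N y)) y) x
        + ((α * Avec j x 0 : ℝ) : ℂ)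
          * Dop α j 0 (fun y : Conf N => ((Rfun α (Wm N y) : ℝ) : ℂ) * g (Wm N y)) x := rfl
  have e1 : Dop α j 1 (fun y =>
        Dop α j 1 (fun y : Conf N => ((Rfun α (Wm N y) : ℝ) : ℂ) * g (Wm N y)) y) x
      = -Complex.I * pd j 1 (fun y =>
          Dop α j 1 (fun y : Conf N => ((Rfun α (Wm N y) : ℝ) : ℂ) * g (Wm N y)) y) x
        + ((α * Avec j x 1 : ℝ) : ℂ)
          * Dop α j 1 (fun y : Conf N => ((Rfun α (Wm N y) : ℝ) : ℂ) * g (Wm N y)) x := rfl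
  rw [e0, e1]
  rw [pd_congr isOpen_compl_fatDiag hx h0 j 0, pd_congr isOpen_compl_fatDiag hx h1 j 1]
  rw [pd_const_mul hHdiff (-Complex.I) j 0, pd_const_mul hHdiff (1 : ℂ) j 1]
  rw [hpd0, hpd1]
  rw [h0 x hx, h1 x hx]
  rw [Avec_eq_im, Avec_eq_re]
  obtain ⟨a, b, hS⟩ : ∃ a b : ℝ, Sfun j (Wm N x) = (a : ℂ) + (b : ℂ) * Complex.I :=
    ⟨_, _, (Complex.re_add_im _).symm⟩
  have g0 : (((1:ℂ)) * ((a : ℂ) + (b : ℂ) * Complex.I)).re = a := by simp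
  have g1 : ((Complex.I) * ((a : ℂ) + (b : ℂ) * Complex.I)).re = -b := by simp
  have gim : (((a : ℂ) + (b : ℂ) * Complex.I)).im = b := by simp
  have gre : (((a : ℂ) + (b : ℂ) * Complex.I)).re = a := by simp
  simp only [cc, Matrix.cons_val_zero, Matrix.cons_val_one, Matrix.head_cons]
  rw [hS, g0, g1, gim, gre]
  push_cast
  linear_combination ((Rfun α (Wm N x) : ℂ) * KKm α g j (Wm N x) * (α : ℂ) * (a : ℂ))
    * Complex.I_sq

lemma D2_plus (α : ℝ) {g : (Fin N → ℂ) → ℂ} (hg : Differentiable ℂ g) (j : Fin N) {x : Conf N}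
    (hx : x ∈ (fatDiag N)ᶜ) :
    D2 α j (fun y : Conf N => ((Rfun (-α) (Wm N y) : ℝ) : ℂ) * conj (g (Wm N y))) x = 0 := by
  have hzd := sep_of_mem hx
  have hKd : DifferentiableAt ℂ (KKp α g j) (Wm N x) := diff_KKp α hg j hzd
  have hqK0 : HasFDerivAt (KKp α g j)
      ((fderiv ℂ (KKp α g j) (Wm N x)).restrictScalars ℝ) (Wm N x) :=
    (hKd.hasFDerivAt).restrictScalars ℝ
  have hqK := hasFDerivAt_conj_comp hqK0
  have hHdiff : DifferentiableAt ℝ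
      (fun y : Conf N => ((Rfun (-α) (Wm N y) : ℝ) : ℂ) * conj (KKp α g j (Wm N y))) x :=
    (hasFDerivAt_mulRW (-α) hx hqK).differentiableAt
  have hpd0 := pd_mulRW (-α) hx hqK j 0
  have hpd1 := pd_mulRW (-α) hx hqK j 1
  have hcval : ∀ c : ℂ, ((Complex.conjCLE.toContinuousLinearMap : ℂ →L[ℝ] ℂ).comp
      ((fderiv ℂ (KKp α g j) (Wm N x)).restrictScalars ℝ)) (Pi.single j c)
      = conj (c * fderiv ℂ (KKp α g j) (Wm N x) (Pi.single j 1)) := by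
    intro c
    rw [ContinuousLinearMap.comp_apply, restrict_single]
    rfl
  rw [hcval] at hpd0 hpd1
  have h0 : ∀ y ∈ (fatDiag N)ᶜ,
      Dop α j 0 (fun y : Conf N => ((Rfun (-α) (Wm N y) : ℝ) : ℂ) * conj (g (Wm N y))) y
        = -Complex.I * (((Rfun (-α) (Wm N y) : ℝ) : ℂ) * conj (KKp α g j (Wm N y))) :=
    fun y hy => (Dop_plus_vals α hg j hy).1
  have h1 : ∀ y ∈ (fatDiag N)ᶜ,
      Dop α j 1 (fun y : Conf N => ((Rfun (-α) (Wm N y) : ℝ) : ℂ) * conj (g (Wm N y))) y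
        = (-1 : ℂ) * (((Rfun (-α) (Wm N y) : ℝ) : ℂ) * conj (KKp α g j (Wm N y))) := by
    intro y hy
    rw [(Dop_plus_vals α hg j hy).2]
    ring
  unfold D2
  rw [Fin.sum_univ_two]
  have e0 : Dop α j 0 (fun y =>
        Dop α j 0 (fun y : Conf N => ((Rfun (-α) (Wm N y) : ℝ) : ℂ) * conj (g (Wm N y))) y) x
      = -Complex.I * pd j 0 (fun y =>
          Dop α j 0 (fun y : Conf N => ((Rfun (-α) (Wm N y) : ℝ) : ℂ) * conj (g (Wm N y))) y) x
        + ((α * Avec j x 0 : ℝ) : ℂ)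
          * Dop α j 0 (fun y : Conf N =>
              ((Rfun (-α) (Wm N y) : ℝ) : ℂ) * conj (g (Wm N y))) x := rfl
  have e1 : Dop α j 1 (fun y =>
        Dop α j 1 (fun y : Conf N => ((Rfun (-α) (Wm N y) : ℝ) : ℂ) * conj (g (Wm N y))) y) x
      = -Complex.I * pd j 1 (fun y =>
          Dop α j 1 (fun y : Conf N => ((Rfun (-α) (Wm N y) : ℝ) : ℂ) * conj (g (Wm N y))) y) x
        + ((α * Avec j x 1 : ℝ) : ℂ)
          * Dop α j 1 (fun y : Conf N =>
              ((Rfun (-α) (Wm N y) : ℝ) : ℂ) * conj (g (Wm N y))) x := rfl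
  rw [e0, e1]
  rw [pd_congr isOpen_compl_fatDiag hx h0 j 0, pd_congr isOpen_compl_fatDiag hx h1 j 1]
  rw [pd_const_mul hHdiff (-Complex.I) j 0, pd_const_mul hHdiff (-1 : ℂ) j 1]
  rw [hpd0, hpd1]
  rw [h0 x hx, h1 x hx]
  rw [Avec_eq_im, Avec_eq_re]
  obtain ⟨a, b, hS⟩ : ∃ a b : ℝ, Sfun j (Wm N x) = (a : ℂ) + (b : ℂ) * Complex.I :=
    ⟨_, _, (Complex.re_add_im _).symm⟩
  have g0 : (((1:ℂ)) * ((a : ℂ) + (b : ℂ) * Complex.I)).re = a := by simp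
  have g1 : ((Complex.I) * ((a : ℂ) + (b : ℂ) * Complex.I)).re = -b := by simp
  have gim : (((a : ℂ) + (b : ℂ) * Complex.I)).im = b := by simp
  have gre : (((a : ℂ) + (b : ℂ) * Complex.I)).re = a := by simp
  simp only [cc, Matrix.cons_val_zero, Matrix.cons_val_one, Matrix.head_cons]
  rw [hS, g0, g1, gim, gre]
  simp only [map_mul, map_one, Complex.conj_I]
  push_cast
  linear_combination (-((Rfun (-α) (Wm N x) : ℂ) * conj (KKp α g j (Wm N x)) * (α : ℂ)
    * (a : ℂ))) * Complex.I_sq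

lemma Rfun_eq_prod (β : ℝ) (y : Conf N) :
    Rfun β (Wm N y) = ∏ p ∈ Finset.univ.filter (fun p : Fin N × Fin N => p.1 < p.2),
      nrm (y p.1 - y p.2) ^ β := by
  unfold Rfun
  apply Finset.prod_congr rfl
  intro p _
  rw [Wm_sub_pair, ← nrm_eq_abs]

end Anyon

/-- For `g` holomorphic, `Ψ₊ = ∏_{j<k}|x_j-x_k|^{-α}·conj(g(z))` and
`Ψ₋ = ∏_{j<k}|x_j-x_k|^{α}·g(z)` are generalized zero-energy eigenfunctions of the
`N`-anyon kinetic energy operator away from the fat diagonal. -/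
theorem statement1 (N : ℕ) (hN : 1 ≤ N) (α : ℝ)
    (g : (Fin N → ℂ) → ℂ) (hg : Differentiable ℂ g) :
    ∀ x : Conf N, x ∉ fatDiag N →
      (∑ j, D2 α j (fun y =>
        ((∏ p ∈ univ.filter (fun p : Fin N × Fin N => p.1 < p.2),
            nrm (y p.1 - y p.2) ^ (-α) : ℝ) : ℂ)
          * conj (g (fun j => zC (y j)))) x = 0)
      ∧ (∑ j, D2 α j (fun y =>
        ((∏ p ∈ univ.filter (fun p : Fin N × Fin N => p.1 < p.2),
            nrm (y p.1 - y p.2) ^ α : ℝ) : ℂ)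
          * g (fun j => zC (y j))) x = 0) := by
  intro x hx
  have hx' : x ∈ (fatDiag N)ᶜ := hx
  constructor
  · have hfun : (fun y : Conf N =>
        ((∏ p ∈ univ.filter (fun p : Fin N × Fin N => p.1 < p.2),
            nrm (y p.1 - y p.2) ^ (-α) : ℝ) : ℂ) * conj (g (fun j => zC (y j))))
        = fun y : Conf N => ((Anyon.Rfun (-α) (Anyon.Wm N y) : ℝ) : ℂ) * conj (g (Anyon.Wm N y)) := by
      funext y
      rw [Anyon.Rfun_eq_prod]
      have harg : (fun j => zC (y j)) = Anyon.Wm N y :=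
        funext fun k => (Anyon.Wm_apply y k).symm
      rw [harg]
    rw [hfun]
    apply Finset.sum_eq_zero
    intro j _
    exact Anyon.D2_plus α hg j hx'
  · have hfun : (fun y : Conf N =>
        ((∏ p ∈ univ.filter (fun p : Fin N × Fin N => p.1 < p.2),
            nrm (y p.1 - y p.2) ^ α : ℝ) : ℂ) * g (fun j => zC (y j)))
        = fun y : Conf N => ((Anyon.Rfun α (Anyon.Wm N y) : ℝ) : ℂ) * g (Anyon.Wm N y) := by
      funext y
      rw [Anyon.Rfun_eq_prod]
      have harg : (fun j => zC (y j)) = Anyon.Wm N y :=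
        funext fun k => (Anyon.Wm_apply y k).symm
      rw [harg]
    rw [hfun]
    apply Finset.sum_eq_zero
    intro j _
    exact Anyon.D2_minus α hg j hx'
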